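/- arXiv:1010.0225 — 7 statements merged into one kernel-verified Lean document; each statement's English description precedes it below -/
import Mathlib

section
/- If an ETL frame has perfect recall with respect to history consistency (local version) PR_hcl, then it has perfect recall with respect to history consistency PR_hc. -/
attribute [local instance] Classical.propDecidable

/-- A protocol is a prefix-closed set of histories. -/
def PrefixClosed {E : Type*} (H : Set (List E)) : Prop :=
  ∀ g h : List E, g <+: h → h ∈ H → g ∈ H

/-- Perfect recall with respect to history consistency. -/
def PRhc {E : Type*} (H : Set (List E)) (sim : List E → List E → Prop) : Prop :=
  ∀ (h h' : List E) (e : E), h ∈ H → h ++ [e] ∈ H → h' ∈ H → sim (h ++ [e]) h' →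
    ∃ h'', h'' ∈ H ∧ sim h h'' ∧ h'' <+: h'

/-- Perfect recall with respect to history consistency, local version. -/
def PRhcl {E : Type*} (H : Set (List E)) (sim : List E → List E → Prop) : Prop :=
  ∀ (h h' : List E) (e : E), h ∈ H → h ++ [e] ∈ H → h' ∈ H → sim (h ++ [e]) h' →
    sim h h' ∨
    (∃ (h'' : List E) (e'' : E), h'' ∈ H ∧ sim h h'' ∧ h' = h'' ++ [e'']) ∨
    (∃ (h'' : List E) (e'' : E), h'' ∈ H ∧ sim (h ++ [e]) h'' ∧ h' = h'' ++ [e''])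

/-- The information set of a history. -/
def infoSet {E : Type*} (H : Set (List E)) (sim : List E → List E → Prop) (h : List E) :
    Set (List E) := {h' | h' ∈ H ∧ sim h h'}

/-- The epistemic experience along a history (information sets over all prefixes, in order),
with consecutive repetitions of identical sets removed (destuttered). -/
noncomputable def EEd {E : Type*} (H : Set (List E)) (sim : List E → List E → Prop)
    (h : List E) : List (Set (List E)) :=
  ((List.range (h.length + 1)).map fun n => infoSet H sim (h.take n)).destutter (· ≠ ·)

/-- Perfect recall with respect to epistemic experience: accessible histories have
equivalent epistemic experiences modulo stutterings. -/
def PRee {E : Type*} (H : Set (List E)) (sim : List E → List E → Prop) : Prop :=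
  ∀ h h' : List E, h ∈ H → h' ∈ H → sim h h' → EEd H sim h = EEd H sim h'

def TransOn {E : Type*} (H : Set (List E)) (sim : List E → List E → Prop) : Prop :=
  ∀ a b c : List E, a ∈ H → b ∈ H → c ∈ H → sim a b → sim b c → sim a c

def EuclOn {E : Type*} (H : Set (List E)) (sim : List E → List E → Prop) : Prop :=
  ∀ a b c : List E, a ∈ H → b ∈ H → c ∈ H → sim a b → sim a c → sim b c

/-- S5: the accessibility relation is an equivalence relation on the protocol. -/
def S5on {E : Type*} (H : Set (List E)) (sim : List E → List E → Prop) : Prop :=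
  (∀ h ∈ H, sim h h) ∧ (∀ h h' : List E, sim h h' → sim h' h) ∧
    (∀ a b c : List E, sim a b → sim b c → sim a c)

/-- Synchronous perfect recall. -/
def sPR {E : Type*} (H : Set (List E)) (sim : List E → List E → Prop) : Prop :=
  ∀ (h h' : List E) (e : E), h ∈ H → h ++ [e] ∈ H → h' ∈ H → sim (h ++ [e]) h' →
    ∃ (h'' : List E) (e' : E), h'' ∈ H ∧ sim h h'' ∧ h' = h'' ++ [e']

/-- Weak synchronous perfect recall. -/
def wsPR {E : Type*} (H : Set (List E)) (sim : List E → List E → Prop) : Prop :=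
  ∀ (h h' : List E) (e e' : E), h ∈ H → h' ∈ H → h ++ [e] ∈ H → h' ++ [e'] ∈ H →
    sim (h ++ [e]) (h' ++ [e']) → sim h h'

/-- The reflexive-symmetric closure (= S5 closure on introspective frames). -/
def S5cl {E : Type*} (sim : List E → List E → Prop) (h h' : List E) : Prop :=
  h = h' ∨ sim h h' ∨ sim h' h

def PersistentInsanity {E : Type*} (H : Set (List E)) (sim : List E → List E → Prop) : Prop :=
  ∀ h h' : List E, h ∈ H → h' ∈ H → infoSet H sim h = ∅ → h <+: h' → infoSet H sim h' = ∅

/-- If an ETL frame has PR_hcl, then it has PR_hc. -/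
theorem prhcl_implies_prhc {E : Type*} [Fintype E] (H : Set (List E))
    (sim : List E → List E → Prop) (hH : PrefixClosed H) (hpr : PRhcl H sim) :
    PRhc H sim := by
  intro h h' e hh hhe hh' hsim
  suffices key : ∀ n h', h'.length ≤ n → h' ∈ H → sim (h ++ [e]) h' →
      ∃ h'' ∈ H, sim h h'' ∧ h'' <+: h' by
    exact key h'.length h' le_rfl hh' hsim
  clear hh' hsim h'
  intro n
  induction n with
  | zero =>
    intro h' hlen hh' hsim
    rcases hpr h h' e hh hhe hh' hsim with hs | ⟨h'', e'', hm, hs, heq⟩ |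
        ⟨h'', e'', hm, hs, heq⟩
    · exact ⟨h', hh', hs, List.prefix_refl _⟩
    · exact ⟨h'', hm, hs, heq ▸ List.prefix_append _ _⟩
    · subst heq; simp at hlen
  | succ n ih =>
  intro h' hlen hh' hsim
  rcases hpr h h' e hh hhe hh' hsim with hs | ⟨h'', e'', hm, hs, heq⟩ |
      ⟨h'', e'', hm, hs, heq⟩
  · exact ⟨h', hh', hs, List.prefix_refl _⟩
  · exact ⟨h'', hm, hs, heq ▸ List.prefix_append _ _⟩
  · subst heq
    obtain ⟨g, hg, hgs, hgp⟩ := ih h'' (by simp at hlen; omega) hm hs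
    exact ⟨g, hg, hgs, hgp.trans (List.prefix_append _ _)⟩
end

section
/- Any ETL frame that has perfect recall with respect to epistemic experience (PR_ee) has a transitive and Euclidean accessibility relation. -/
attribute [local instance] Classical.propDecidable

lemma my_getLast?_cons_ne_nil {α : Type*} {a : α} {t : List α} (h : t ≠ []) :
    (a :: t).getLast? = t.getLast? := by
  cases t with
  | nil => exact absurd rfl h
  | cons b l => rw [List.getLast?_cons_cons]

lemma my_destutter'_getLast? {α : Type*} [DecidableEq α] :
    ∀ (l : List α) (a : α),
      (l.destutter' (· ≠ ·) a).getLast? = (a :: l).getLast? := by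
  intro l
  induction l with
  | nil => intro a; simp [List.destutter']
  | cons b l ih =>
    intro a
    by_cases h : a ≠ b
    · rw [List.destutter'_cons_pos _ h,
        my_getLast?_cons_ne_nil (List.destutter'_ne_nil _ _),
        ih b, List.getLast?_cons_cons]
    · rw [List.destutter'_cons_neg _ h]
      push_neg at h
      subst h
      rw [ih a, List.getLast?_cons_cons]

lemma EEd_getLast? {E : Type*} (H : Set (List E)) (sim : List E → List E → Prop)
    (h : List E) : (EEd H sim h).getLast? = some (infoSet H sim h) := by
  unfold EEd
  obtain ⟨a, t, hat⟩ := List.exists_cons_of_ne_nil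
    (l := (List.range (h.length + 1)).map (fun n => infoSet H sim (h.take n))) (by simp)
  rw [hat, List.destutter_cons', my_destutter'_getLast?, ← hat,
    List.getLast?_eq_getElem?]
  simp

lemma pree_infoSet_eq {E : Type*} (H : Set (List E)) (sim : List E → List E → Prop)
    (hpr : PRee H sim) {h h' : List E} (hh : h ∈ H) (hh' : h' ∈ H) (hs : sim h h') :
    infoSet H sim h = infoSet H sim h' := by
  have := hpr h h' hh hh' hs
  have e1 := EEd_getLast? H sim h
  have e2 := EEd_getLast? H sim h'
  rw [this, e2] at e1
  exact (Option.some_injective _ e1).symm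

/-- Any ETL frame with PR_ee has a transitive and Euclidean accessibility relation. -/
theorem pree_implies_trans_eucl {E : Type*} [Fintype E] (H : Set (List E))
    (sim : List E → List E → Prop) (hH : PrefixClosed H) (hpr : PRee H sim) :
    TransOn H sim ∧ EuclOn H sim := by
  constructor
  · intro a b c ha hb hc hab hbc
    have e := pree_infoSet_eq H sim hpr ha hb hab
    have : c ∈ infoSet H sim b := ⟨hc, hbc⟩
    rw [← e] at this
    exact this.2
  · intro a b c ha hb hc hab hac
    have e := pree_infoSet_eq H sim hpr ha hb hab
    have : c ∈ infoSet H sim a := ⟨hc, hac⟩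
    rw [e] at this
    exact this.2
end

section
/- An ETL frame validates the formula ⟨e⟩L p → (L p ∨ L◇p ∨ ⟨e⟩L◇p) for every event e and every valuation of the atom p if and only if the frame has PR_hcl. -/
attribute [local instance] Classical.propDecidable

/-- An ETL frame validates ⟨e⟩L p → (L p ∨ L◇p ∨ ⟨e⟩L◇p), for every event e and
valuation of p, iff it has PR_hcl. -/
theorem axiom_iff_prhcl {E : Type*} [Fintype E] (H : Set (List E))
    (sim : List E → List E → Prop) (hH : PrefixClosed H) :
    (∀ (V : Set (List E)) (e : E) (h : List E), h ∈ H →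
      ((h ++ [e] ∈ H ∧ ∃ g, g ∈ H ∧ sim (h ++ [e]) g ∧ g ∈ V) →
        (∃ g, g ∈ H ∧ sim h g ∧ g ∈ V) ∨
        (∃ g, g ∈ H ∧ sim h g ∧ ∃ e', g ++ [e'] ∈ H ∧ g ++ [e'] ∈ V) ∨
        (h ++ [e] ∈ H ∧ ∃ g, g ∈ H ∧ sim (h ++ [e]) g ∧
          ∃ e', g ++ [e'] ∈ H ∧ g ++ [e'] ∈ V)))
    ↔ PRhcl H sim := by
  constructor
  · intro hax h h' e hh hhe hh' hsim
    rcases hax {h'} e h hh ⟨hhe, h', hh', hsim, rfl⟩ with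
      ⟨g, hg, hs, hgv⟩ | ⟨g, hg, hs, e', hge, hgv⟩ | ⟨_, g, hg, hs, e', hge, hgv⟩
    · exact Or.inl (hgv ▸ hs)
    · exact Or.inr (Or.inl ⟨g, e', hg, hs, hgv.symm⟩)
    · exact Or.inr (Or.inr ⟨g, e', hg, hs, hgv.symm⟩)
  · intro hpr V e h hh ⟨hhe, g, hg, hs, hgv⟩
    rcases hpr h g e hh hhe hg hs with
      hsim | ⟨h'', e'', hh'', hs'', rfl⟩ | ⟨h'', e'', hh'', hs'', rfl⟩
    · exact Or.inl ⟨g, hg, hsim, hgv⟩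
    · exact Or.inr (Or.inl ⟨h'', hh'', hs'', e'', hg, hgv⟩)
    · exact Or.inr (Or.inr ⟨hhe, h'', hh'', hs'', e'', hg, hgv⟩)
end

section
/- For any introspective (transitive and Euclidean) ETL frame with PR_hcl, and histories h1, h2 with h1 a prefix of h2 and h1 ∼ h2, for each prefix h1' of h1 there is a prefix h2' of h2 such that h1' ∼ h2'. -/
attribute [local instance] Classical.propDecidable

private lemma aux_PRhc {E : Type*} (H : Set (List E)) (sim : List E → List E → Prop)
    (hpr : PRhcl H sim) : PRhc H sim := by
  have main : ∀ n (h h' : List E) (e : E), h'.length ≤ n → h ∈ H → h ++ [e] ∈ H → h' ∈ H →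
      sim (h ++ [e]) h' → ∃ h'', h'' ∈ H ∧ sim h h'' ∧ h'' <+: h' := by
    intro n
    induction n with
    | zero =>
      intro h h' e hlen hh hhe hh' hsim
      rcases hpr h h' e hh hhe hh' hsim with h1 | ⟨h'', e'', hmem, hs, heq⟩ | ⟨h'', e'', hmem, hs, heq⟩
      · exact ⟨h', hh', h1, List.prefix_refl h'⟩
      · exact ⟨h'', hmem, hs, heq ▸ List.prefix_append h'' [e'']⟩
      · subst heq; simp at hlen
    | succ n ih =>
      intro h h' e hlen hh hhe hh' hsim
      rcases hpr h h' e hh hhe hh' hsim with h1 | ⟨h'', e'', hmem, hs, heq⟩ | ⟨h'', e'', hmem, hs, heq⟩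
      · exact ⟨h', hh', h1, List.prefix_refl h'⟩
      · exact ⟨h'', hmem, hs, heq ▸ List.prefix_append h'' [e'']⟩
      · subst heq
        have hlen' : h''.length ≤ n := by
          simpa using Nat.lt_succ_iff.mp (lt_of_lt_of_le (by simp) hlen)
        obtain ⟨g, hg, hgs, hgp⟩ := ih h h'' e hlen' hh hhe hmem hs
        exact ⟨g, hg, hgs, hgp.trans (List.prefix_append h'' [e''])⟩
  intro h h' e hh hhe hh' hsim
  exact main h'.length h h' e le_rfl hh hhe hh' hsim

private lemma aux_key {E : Type*} (H : Set (List E)) (sim : List E → List E → Prop)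
    (hH : PrefixClosed H) (hpr : PRhc H sim) :
    ∀ h1 h2 : List E, h2 ∈ H → h1 ∈ H → sim h1 h2 →
      ∀ h1' : List E, h1' <+: h1 → ∃ h2', h2' ∈ H ∧ h2' <+: h2 ∧ sim h1' h2' := by
  intro h1
  induction h1 using List.reverseRecOn with
  | nil =>
    intro h2 hm hh1 hs h1' hp
    rw [List.prefix_nil] at hp
    subst hp
    exact ⟨h2, hm, List.prefix_refl h2, hs⟩
  | append_singleton g e ihg =>
    intro h2 hm hh1 hs h1' hp
    rcases List.prefix_concat_iff.mp hp with heq | hp'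
    · subst heq; exact ⟨h2, hm, List.prefix_refl h2, hs⟩
    · have hg : g ∈ H := hH g (g ++ [e]) (List.prefix_append g [e]) hh1
      obtain ⟨h'', hmem, hsim2, hpre⟩ := hpr g h2 e hg hh1 hm hs
      obtain ⟨h2', hm2, hp2, hs2⟩ := ihg h'' hmem hg hsim2 h1' hp'
      exact ⟨h2', hm2, hp2.trans hpre, hs2⟩

/-- On introspective frames with PR_hcl, accessibility propagates along prefixes. -/
theorem acc_along_history {E : Type*} [Fintype E] (H : Set (List E))
    (sim : List E → List E → Prop) (hH : PrefixClosed H)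
    (ht : TransOn H sim) (he : EuclOn H sim) (hpr : PRhcl H sim)
    (h1 h2 : List E) (hm : h2 ∈ H) (hp : h1 <+: h2) (hs : sim h1 h2) :
    ∀ h1' : List E, h1' <+: h1 → ∃ h2', h2' ∈ H ∧ h2' <+: h2 ∧ sim h1' h2' := by
  have h1m : h1 ∈ H := hH h1 h2 hp hm
  exact aux_key H sim hH (aux_PRhc H sim hpr) h1 h2 hm h1m hs
end

section
/- For any introspective (transitive and Euclidean) ETL frame with PR_hcl, and histories h1, h, h2, h2' with h2' a prefix of h, h a prefix of h2, h1 ∼ h2 and h1 ∼ h2', there holds h1 ≈∼ h where ≈∼ denotes the equivalence closure (reflexive-symmetric-transitive closure) of ∼. -/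
attribute [local instance] Classical.propDecidable

/-- Auxiliary lemma: if `sim c d` with `d <+: x <+: c` (all in the protocol), then
`c` is related to `x` in the equivalence closure of `sim`. Proved by strong induction
on `c.length + d.length`, peeling the last event of `c` using PR_hcl. -/
theorem flashlight_key {E : Type*} (H : Set (List E))
    (sim : List E → List E → Prop) (hH : PrefixClosed H) (hpr : PRhcl H sim) :
    ∀ n : ℕ, ∀ c d x : List E, c.length + d.length ≤ n → c ∈ H → d ∈ H →
      sim c d → d <+: x → x <+: c → Relation.EqvGen sim c x := by
  intro n
  induction n with
  | zero =>
    intro c d x hn _ _ _ _ hxc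
    have hc : c = [] := List.eq_nil_of_length_eq_zero (by omega)
    have : x = [] := List.prefix_nil.mp (hc ▸ hxc)
    rw [this, hc]
    exact Relation.EqvGen.refl []
  | succ n ih =>
    intro c d x hn hcH hdH hsim hdx hxc
    by_cases hxeq : x = c
    · rw [hxeq]; exact Relation.EqvGen.refl c
    · have hlt : x.length < c.length := lt_of_le_of_ne hxc.length_le
        (fun h => hxeq (List.prefix_iff_eq_take.mp hxc ▸ by rw [h, List.take_length]))
      have hcne : c ≠ [] := by intro h; rw [h] at hlt; simp at hlt
      set g := c.dropLast with hg
      set e := c.getLast hcne with he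
      have hc : g ++ [e] = c := List.dropLast_append_getLast hcne
      have hgH : g ∈ H := hH g c (List.dropLast_prefix c) hcH
      have hglen : g.length + 1 = c.length := by
        rw [← hc]; simp
      have hxg : x <+: g := by
        have := List.prefix_iff_eq_take.mp hxc
        rw [this, hg, List.dropLast_eq_take]
        exact List.take_prefix_take_left (by omega)
      have hsim' : sim (g ++ [e]) d := by rw [hc]; exact hsim
      rcases hpr g d e hgH (hc ▸ hcH) hdH hsim' with h1 | ⟨h'', e'', hm'', hs'', hd''⟩ |
        ⟨h'', e'', hm'', hs'', hd''⟩
      · -- sim g d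
        have hgx : Relation.EqvGen sim g x := ih g d x (by omega) hgH hdH h1 hdx hxg
        exact Relation.EqvGen.trans _ _ _
          (Relation.EqvGen.trans _ _ _ (Relation.EqvGen.rel _ _ hsim)
            (Relation.EqvGen.symm _ _ (Relation.EqvGen.rel _ _ h1))) hgx
      · -- sim g h'', d = h'' ++ [e'']
        have hdlen : h''.length + 1 = d.length := by rw [hd'']; simp
        have hhd : h'' <+: d := by rw [hd'']; exact List.prefix_append _ _
        have hgd : Relation.EqvGen sim g d :=
          ih g h'' d (by omega) hgH hm'' hs'' hhd (hdx.trans hxg)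
        have hgx : Relation.EqvGen sim g x :=
          ih g h'' x (by omega) hgH hm'' hs'' (hhd.trans hdx) hxg
        exact Relation.EqvGen.trans _ _ _
          (Relation.EqvGen.trans _ _ _ (Relation.EqvGen.rel _ _ hsim)
            (Relation.EqvGen.symm _ _ hgd)) hgx
      · -- sim c h'', d = h'' ++ [e'']
        have hdlen : h''.length + 1 = d.length := by rw [hd'']; simp
        have hhd : h'' <+: d := by rw [hd'']; exact List.prefix_append _ _
        exact ih c h'' x (by omega) hcH hm'' (hc ▸ hs'') (hhd.trans hdx) hxc

/-- "Flashlight" lemma: on introspective frames with PR_hcl, intermediate histories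
are related to h1 in the equivalence closure of the accessibility relation. -/
theorem flashlight {E : Type*} [Fintype E] (H : Set (List E))
    (sim : List E → List E → Prop) (hH : PrefixClosed H)
    (ht : TransOn H sim) (he : EuclOn H sim) (hpr : PRhcl H sim)
    (h1 h h2 h2' : List E) (hm1 : h1 ∈ H) (hm2 : h2 ∈ H) (hmh : h ∈ H)
    (hp1 : h2' <+: h) (hp2 : h <+: h2) (hs1 : sim h1 h2) (hs2 : sim h1 h2') :
    Relation.EqvGen sim h1 h := by
  have hm2' : h2' ∈ H := hH h2' h hp1 hmh
  have hs3 : sim h2 h2' := he h1 h2 h2' hm1 hm2 hm2' hs1 hs2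
  exact Relation.EqvGen.trans _ _ _ (Relation.EqvGen.rel _ _ hs1)
    (flashlight_key H sim hH hpr (h2.length + h2'.length) h2 h2' h le_rfl
      hm2 hm2' hs3 hp1 hp2)
end

section
/- PR_hcl implies persistent insanity: in any ETL frame with PR_hcl, if [h]∼ = ∅ and h is a prefix of h', then [h']∼ = ∅. -/
attribute [local instance] Classical.propDecidable

lemma prhcl_step {E : Type*} (H : Set (List E)) (sim : List E → List E → Prop)
    (hpr : PRhcl H sim) (h : List E) (e : E) (hh : h ∈ H) (hhe : h ++ [e] ∈ H)
    (hempty : infoSet H sim h = ∅) : infoSet H sim (h ++ [e]) = ∅ := by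
  have hno : ∀ g, g ∈ H → ¬ sim h g := by
    intro g hg hs
    have : g ∈ infoSet H sim h := ⟨hg, hs⟩
    rw [hempty] at this; exact this
  have key : ∀ n : ℕ, ∀ g, g ∈ H → sim (h ++ [e]) g → g.length < n → False := by
    intro n
    induction n with
    | zero => intro g _ _ hlt; omega
    | succ n ih =>
      intro g hg hs hlt
      rcases hpr h g e hh hhe hg hs with h1 | ⟨h'', e'', hm, hs', _⟩ |
        ⟨h'', e'', hm, hs', heq⟩
      · exact hno g hg h1
      · exact hno h'' hm hs'
      · apply ih h'' hm hs'
        subst heq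
        simp at hlt ⊢
        omega
  ext g
  simp only [Set.mem_empty_iff_false, iff_false]
  rintro ⟨hg, hs⟩
  exact key (g.length + 1) g hg hs (by omega)

/-- PR_hcl implies persistent insanity. -/
theorem prhcl_implies_persistent_insanity {E : Type*} [Fintype E] (H : Set (List E))
    (sim : List E → List E → Prop) (hH : PrefixClosed H) (hpr : PRhcl H sim) :
    PersistentInsanity H sim := by
  intro h h' hh hh' hemp hpre
  obtain ⟨t, rfl⟩ := hpre
  induction t using List.reverseRecOn with
  | nil => simpa using hemp
  | append_singleton t e ih =>
    rw [← List.append_assoc] at hh' ⊢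
    have hmem : h ++ t ∈ H := hH _ _ ⟨[e], by simp⟩ hh'
    exact prhcl_step H sim hpr (h ++ t) e hmem hh' (ih hmem)
end

section
/- An introspective (transitive and Euclidean) ETL tree has PR (i.e., both PR_ee and PR_hcl) if and only if it has PR_hcl. -/
attribute [local instance] Classical.propDecidable

lemma my_destutter_concat' {α : Type*} :
    ∀ (l : List α) (a x : α), (l ++ [x]).destutter' (· ≠ ·) a =
      if (a :: l).getLast? = some x then l.destutter' (· ≠ ·) a
      else l.destutter' (· ≠ ·) a ++ [x] := by
  intro l
  induction l with
  | nil =>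
    intro a x
    simp only [List.nil_append, List.destutter'_singleton, List.getLast?_singleton,
      List.destutter'_nil, Option.some_inj]
    by_cases h : a = x
    · simp [h]
    · simp [h, Ne.symm]
  | cons b t ih =>
    intro a x
    rw [List.cons_append, List.destutter'_cons, List.destutter'_cons]
    by_cases hab : a ≠ b
    · rw [if_pos hab, if_pos hab, ih b x]
      rw [List.getLast?_cons_cons]
      by_cases hc : (b :: t).getLast? = some x
      · rw [if_pos hc, if_pos hc]
      · rw [if_neg hc, if_neg hc]; rfl
    · rw [if_neg hab, if_neg hab, ih a x]
      push_neg at hab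
      subst hab
      have : (a :: t).getLast? = (a :: a :: t).getLast? := (List.getLast?_cons_cons).symm
      rw [this]

lemma my_destutter_concat {α : Type*} (l : List α) (x : α) :
    (l ++ [x]).destutter (· ≠ ·) =
      if l.getLast? = some x then l.destutter (· ≠ ·)
      else l.destutter (· ≠ ·) ++ [x] := by
  cases l with
  | nil => simp [List.destutter_singleton, List.destutter_nil]
  | cons a t =>
    rw [List.cons_append, List.destutter_cons', List.destutter_cons', my_destutter_concat' t a x]


section
variable {E : Type*} (H : Set (List E)) (sim : List E → List E → Prop)


lemma my_EEd_nil : EEd H sim [] = [infoSet H sim []] := by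
  have : List.range 1 = [0] := rfl
  simp [EEd, this, List.destutter_singleton]

lemma my_EEd_concat (g : List E) (e : E) :
    EEd H sim (g ++ [e]) = if infoSet H sim (g ++ [e]) = infoSet H sim g
      then EEd H sim g else EEd H sim g ++ [infoSet H sim (g ++ [e])] := by
  unfold EEd
  have hmap : ((List.range ((g ++ [e]).length + 1)).map
        fun n => infoSet H sim ((g ++ [e]).take n)) =
      ((List.range (g.length + 1)).map fun n => infoSet H sim (g.take n)) ++
        [infoSet H sim (g ++ [e])] := by
    have hl : (g ++ [e]).length + 1 = (g.length + 1) + 1 := by simp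
    rw [hl, List.range_succ, List.map_append]
    congr 1
    · apply List.map_congr_left
      intro n hn
      rw [List.mem_range] at hn
      rw [List.take_append_of_le_length (by omega)]
    · simp [List.take_of_length_le]
  rw [hmap]; erw [my_destutter_concat]
  have hlast : (((List.range (g.length + 1)).map fun n => infoSet H sim (g.take n)).getLast?) =
      some (infoSet H sim g) := by
    rw [List.range_succ, List.map_append]
    simp only [List.map_cons, List.map_nil]
    rw [List.getLast?_concat]
    simp [List.take_of_length_le]
  rw [hlast]
  by_cases h : infoSet H sim (g ++ [e]) = infoSet H sim g
  · rw [if_pos (by rw [h]), if_pos h]; rfl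
  · rw [if_neg (by simpa [eq_comm] using h), if_neg h]; rfl

lemma my_EEd_const :
    ∀ (n : ℕ) (h : List E), h.length ≤ n →
      (∀ p, p <+: h → infoSet H sim p = infoSet H sim []) →
      EEd H sim h = [infoSet H sim []] := by
  intro n
  induction n with
  | zero =>
    intro h hlen _
    have : h = [] := List.length_eq_zero_iff.mp (Nat.le_zero.mp hlen)
    subst this; exact my_EEd_nil H sim
  | succ n ih =>
    intro h hlen hall
    rcases eq_or_ne h [] with rfl | hne
    · exact my_EEd_nil H sim
    · obtain ⟨g, e, rfl⟩ : ∃ g e, h = g ++ [e] :=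
        ⟨h.dropLast, h.getLast hne, (List.dropLast_append_getLast hne).symm⟩
      have hg : EEd H sim g = [infoSet H sim []] := by
        refine ih g (by simp at hlen; omega) (fun p hp => hall p (hp.trans ⟨[e], rfl⟩))
      have h1 : infoSet H sim (g ++ [e]) = infoSet H sim g := by
        rw [hall (g ++ [e]) (List.prefix_refl _), hall g ⟨[e], rfl⟩]
      rw [my_EEd_concat, if_pos h1, hg]


lemma my_mem_info {a x : List E} : x ∈ infoSet H sim a ↔ x ∈ H ∧ sim a x := Iff.rfl

lemma my_info_eq (ht : TransOn H sim) (he : EuclOn H sim) {a b : List E}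
    (ha : a ∈ H) (hb : b ∈ H) (hab : sim a b) :
    infoSet H sim a = infoSet H sim b := by
  ext x
  constructor
  · rintro ⟨hx, hax⟩; exact ⟨hx, he a b x ha hb hx hab hax⟩
  · rintro ⟨hx, hbx⟩; exact ⟨hx, ht a b x ha hb hx hab hbx⟩

lemma my_descent (hH : PrefixClosed H) (hcl : PRhcl H sim) :
    ∀ (n : ℕ) (u p : List E) (q : E), u.length ≤ n → p ∈ H → p ++ [q] ∈ H → u ∈ H →
    sim (p ++ [q]) u →
    (∃ u', u' ∈ H ∧ sim (p ++ [q]) u' ∧ sim p u') ∨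
    (∃ a b, a ∈ H ∧ a ++ [b] ∈ H ∧ sim (p ++ [q]) (a ++ [b]) ∧ sim p a ∧
      (a ++ [b]).length ≤ u.length) := by
  intro n
  induction n using Nat.strong_induction_on with
  | _ n IH =>
  intro u p q hun hp hpq hu hsim
  rcases hcl p u q hp hpq hu hsim with h1 | ⟨h'', e'', hH'', hp'', hEq⟩ | ⟨h'', e'', hH'', hs'', hEq⟩
  · exact Or.inl ⟨u, hu, hsim, h1⟩
  · subst hEq
    exact Or.inr ⟨h'', e'', hH'', hu, hsim, hp'', le_rfl⟩
  · subst hEq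
    have hlen : h''.length < n := by
      simp at hun; omega
    rcases IH h''.length hlen h'' p q le_rfl hp hpq hH'' hs'' with h | ⟨a, b, h1, h2, h3, h4, h5⟩
    · exact Or.inl h
    · exact Or.inr ⟨a, b, h1, h2, h3, h4, by simp at h5 ⊢; omega⟩

lemma my_anchor (hH : PrefixClosed H) (ht : TransOn H sim) (he : EuclOn H sim)
    (hcl : PRhcl H sim) :
    ∀ (n : ℕ) (s : List E), s ∈ H → sim s s → s.length ≤ n →
      infoSet H sim s = infoSet H sim [] ∨
      ∃ r, r ∈ H ∧ sim r r ∧ infoSet H sim r = infoSet H sim [] ∧ r.length < s.length := by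
  intro n
  induction n using Nat.strong_induction_on with
  | _ n IH =>
  intro s hs hss hlen
  by_cases hex : ∃ t, t ∈ H ∧ sim s t ∧ t.length < s.length
  · obtain ⟨t, htH, hst, htl⟩ := hex
    have htt : sim t t := he s t t hs htH htH hst hst
    have hIts : infoSet H sim t = infoSet H sim s := (my_info_eq H sim ht he hs htH hst).symm
    rcases IH t.length (lt_of_lt_of_le htl hlen) t htH htt le_rfl with h1 | ⟨r, h1, h2, h3, h4⟩
    · left; rw [← hIts]; exact h1
    · right; exact ⟨r, h1, h2, h3, h4.trans htl⟩
  · push_neg at hex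
    have Q : ∀ (m : ℕ) (x : List E), x ∈ H → x.length ≤ m →
        infoSet H sim x = infoSet H sim s →
        (infoSet H sim s = infoSet H sim [] ∨
          ∃ r, r ∈ H ∧ sim r r ∧ infoSet H sim r = infoSet H sim [] ∧ r.length < s.length) := by
      intro m
      induction m using Nat.strong_induction_on with
      | _ m IHm =>
      intro x hx hxm hIx
      rcases eq_or_ne x [] with rfl | hxne
      · left; exact hIx.symm
      · obtain ⟨p, q, rfl⟩ : ∃ p q, x = p ++ [q] :=
          ⟨x.dropLast, x.getLast hxne, (List.dropLast_append_getLast hxne).symm⟩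
        have hp : p ∈ H := hH p (p ++ [q]) ⟨[q], rfl⟩ hx
        have hsx : sim (p ++ [q]) s := by
          have hmem : s ∈ infoSet H sim s := ⟨hs, hss⟩
          rw [← hIx] at hmem; exact hmem.2
        rcases my_descent H sim hH hcl s.length s p q le_rfl hp hx hs hsx with
          ⟨u', hu'H, hxu', hpu'⟩ | ⟨a, b, haH, habH, hxab, hpa, hlab⟩
        · have hIp : infoSet H sim p = infoSet H sim s := by
            rw [my_info_eq H sim ht he hp hu'H hpu',
              ← my_info_eq H sim ht he hx hu'H hxu', hIx]
          have hplen : p.length < m := by simp at hxm; omega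
          exact IHm p.length hplen p hp le_rfl hIp
        · have hsab : sim s (a ++ [b]) := by
            have hmem : (a ++ [b]) ∈ infoSet H sim (p ++ [q]) := ⟨habH, hxab⟩
            rw [hIx] at hmem; exact hmem.2
          have h1 : s.length ≤ (a ++ [b]).length := hex _ habH hsab
          have halen : a.length < s.length := by simp at h1 hlab ⊢; omega
          have haa : sim a a := he p a a hp haH haH hpa hpa
          rcases IH a.length (lt_of_lt_of_le halen hlen) a haH haa le_rfl with
            h3 | ⟨r, h3, h4, h5, h6⟩
          · right; exact ⟨a, haH, haa, h3, halen⟩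
          · right; exact ⟨r, h3, h4, h5, h6.trans halen⟩
    exact Q s.length s hs le_rfl rfl

lemma my_core (hH : PrefixClosed H) (ht : TransOn H sim) (he : EuclOn H sim)
    (hcl : PRhcl H sim) {p : List E} {q : E}
    (hp : p ∈ H) (hpq : p ++ [q] ∈ H)
    (hne : ∃ t, t ∈ H ∧ sim [] t)
    (hI : infoSet H sim (p ++ [q]) = infoSet H sim []) :
    infoSet H sim p = infoSet H sim [] := by
  have hS : {n | ∃ t, t ∈ H ∧ sim [] t ∧ t.length = n}.Nonempty := by
    obtain ⟨t, h1, h2⟩ := hne; exact ⟨t.length, t, h1, h2, rfl⟩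
  obtain ⟨t₀, ht₀H, h0t₀, ht₀len⟩ := Nat.sInf_mem hS
  have hmin : ∀ t, t ∈ H → sim [] t →
      sInf {n | ∃ t, t ∈ H ∧ sim [] t ∧ t.length = n} ≤ t.length :=
    fun t h1 h2 => Nat.sInf_le ⟨t, h1, h2, rfl⟩
  have hsimx : sim (p ++ [q]) t₀ := by
    have hmem : t₀ ∈ infoSet H sim [] := ⟨ht₀H, h0t₀⟩
    rw [← hI] at hmem; exact hmem.2
  rcases my_descent H sim hH hcl t₀.length t₀ p q le_rfl hp hpq ht₀H hsimx with
    ⟨u', hu'H, hxu', hpu'⟩ | ⟨a, b, haH, habH, hxab, hpa, hlab⟩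
  · rw [my_info_eq H sim ht he hp hu'H hpu', ← my_info_eq H sim ht he hpq hu'H hxu', hI]
  · have h0ab : sim [] (a ++ [b]) := by
      have hmem : (a ++ [b]) ∈ infoSet H sim (p ++ [q]) := ⟨habH, hxab⟩
      rw [hI] at hmem; exact hmem.2
    have haa : sim a a := he p a a hp haH haH hpa hpa
    rcases my_anchor H sim hH ht he hcl a.length a haH haa le_rfl with h3 | ⟨r, h3, h4, h5, h6⟩
    · rw [my_info_eq H sim ht he hp haH hpa]; exact h3
    · exfalso
      have h0r : sim [] r := by
        have hmem : r ∈ infoSet H sim r := ⟨h3, h4⟩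
        rw [h5] at hmem; exact hmem.2
      have hr1 := hmin r h3 h0r
      have hr2 := hmin _ habH h0ab
      have hl2 : (a ++ [b]).length ≤ t₀.length := hlab
      rw [ht₀len] at hl2
      simp at hl2
      omega

lemma my_allpref (hH : PrefixClosed H) (ht : TransOn H sim) (he : EuclOn H sim)
    (hcl : PRhcl H sim) :
    ∀ (n : ℕ) (x : List E), x ∈ H → x.length ≤ n → (∃ t, t ∈ H ∧ sim [] t) →
      infoSet H sim x = infoSet H sim [] →
      ∀ p, p <+: x → infoSet H sim p = infoSet H sim [] := by
  intro n
  induction n using Nat.strong_induction_on with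
  | _ n IH =>
  intro x hx hxn hne hIx p hpx
  rcases eq_or_ne p x with rfl | hne2
  · exact hIx
  · have hxne : x ≠ [] := by rintro rfl; exact hne2 (List.prefix_nil.mp hpx)
    obtain ⟨y, q, rfl⟩ : ∃ y q, x = y ++ [q] :=
      ⟨x.dropLast, x.getLast hxne, (List.dropLast_append_getLast hxne).symm⟩
    have hy : y ∈ H := hH y _ ⟨[q], rfl⟩ hx
    have hIy := my_core H sim hH ht he hcl hy hx hne hIx
    have hpy : p <+: y := by
      rcases hpx with ⟨t, htEq⟩
      rcases eq_or_ne t [] with rfl | htne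
      · simp at htEq; exact absurd htEq hne2
      · obtain ⟨t', r, rfl⟩ : ∃ t' r, t = t' ++ [r] :=
          ⟨t.dropLast, t.getLast htne, (List.dropLast_append_getLast htne).symm⟩
        rw [← List.append_assoc] at htEq
        exact ⟨t', (List.append_inj' htEq rfl).1⟩
    have hyn : y.length < n := by simp at hxn; omega
    exact IH y.length hyn y hy le_rfl hne hIy p hpy


lemma my_main (hH : PrefixClosed H) (hroot : ([] : List E) ∈ H)
    (ht : TransOn H sim) (he : EuclOn H sim) (hcl : PRhcl H sim) :
    ∀ (N : ℕ) (h h' : List E), h.length + h'.length ≤ N → h ∈ H → h' ∈ H → sim h h' →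
      EEd H sim h = EEd H sim h' := by
  intro N
  induction N using Nat.strong_induction_on with
  | _ N IH =>
  intro h h' hlen hh hh' hsim
  rcases eq_or_ne h [] with rfl | hne
  · have hIh' : infoSet H sim h' = infoSet H sim [] :=
      (my_info_eq H sim ht he hroot hh' hsim).symm
    have hne2 : ∃ t, t ∈ H ∧ sim [] t := ⟨h', hh', hsim⟩
    have hall := my_allpref H sim hH ht he hcl h'.length h' hh' le_rfl hne2 hIh'
    rw [my_EEd_nil, my_EEd_const H sim h'.length h' le_rfl hall]
  · obtain ⟨g, e, rfl⟩ : ∃ g e, h = g ++ [e] :=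
      ⟨h.dropLast, h.getLast hne, (List.dropLast_append_getLast hne).symm⟩
    have hg : g ∈ H := hH g _ ⟨[e], rfl⟩ hh
    have hlg : (g ++ [e]).length = g.length + 1 := by simp
    rcases hcl g h' e hg hh hh' hsim with
      h1 | ⟨h'', e'', hh''H, hg'', rfl⟩ | ⟨h'', e'', hh''H, hx'', rfl⟩
    · have hEE : EEd H sim g = EEd H sim h' :=
        IH (g.length + h'.length) (by omega) g h' le_rfl hg hh' h1
      have e1 : infoSet H sim (g ++ [e]) = infoSet H sim h' :=
        my_info_eq H sim ht he hh hh' hsim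
      have e2 : infoSet H sim g = infoSet H sim h' :=
        my_info_eq H sim ht he hg hh' h1
      rw [my_EEd_concat, if_pos (by rw [e1, e2]), hEE]
    · have hh2 : h'' ∈ H := hH h'' _ ⟨[e''], rfl⟩ hh'
      have hl2 : (h'' ++ [e'']).length = h''.length + 1 := by simp
      have hEE : EEd H sim g = EEd H sim h'' :=
        IH (g.length + h''.length) (by omega) g h'' le_rfl hg hh2 hg''
      have e1 : infoSet H sim (g ++ [e]) = infoSet H sim (h'' ++ [e'']) :=
        my_info_eq H sim ht he hh hh' hsim
      have e2 : infoSet H sim g = infoSet H sim h'' :=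
        my_info_eq H sim ht he hg hh2 hg''
      rw [my_EEd_concat, my_EEd_concat]
      by_cases hc : infoSet H sim (g ++ [e]) = infoSet H sim g
      · rw [if_pos hc, if_pos (by rw [← e1, ← e2, hc]), hEE]
      · rw [if_neg hc, if_neg (by rw [← e1, ← e2]; exact hc), hEE, e1]
    · have hh2 : h'' ∈ H := hH h'' _ ⟨[e''], rfl⟩ hh'
      have hl2 : (h'' ++ [e'']).length = h''.length + 1 := by simp
      have hEE : EEd H sim (g ++ [e]) = EEd H sim h'' :=
        IH ((g ++ [e]).length + h''.length) (by omega) _ h'' le_rfl hh hh2 hx''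
      have hsym : sim h'' (h'' ++ [e'']) := he (g ++ [e]) h'' (h'' ++ [e'']) hh hh2 hh' hx'' hsim
      have e1 : infoSet H sim h'' = infoSet H sim (h'' ++ [e'']) :=
        my_info_eq H sim ht he hh2 hh' hsym
      rw [hEE, my_EEd_concat, if_pos e1.symm]

end

/-- An introspective ETL tree has PR (PR_ee and PR_hcl) iff it has PR_hcl. -/
theorem tree_pr_iff_prhcl {E : Type*} [Fintype E] (H : Set (List E))
    (sim : List E → List E → Prop) (hH : PrefixClosed H) (hroot : ([] : List E) ∈ H)
    (ht : TransOn H sim) (he : EuclOn H sim) :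
    (PRee H sim ∧ PRhcl H sim) ↔ PRhcl H sim := by
  constructor
  · rintro ⟨_, h2⟩; exact h2
  · intro hcl
    refine ⟨?_, hcl⟩
    intro h h' hh hh' hsim
    exact my_main H sim hH hroot ht he hcl (h.length + h'.length) h h' le_rfl hh hh' hsim
end
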